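/- Moment representation: if J is the four-banded matrix acting on the column of vector polynomials by J (B_0, B_1, …)ᵀ = z (B_0, B_1, …)ᵀ, then for each n ≥ 0 the n-th moment satisfies U(z^n P_0) = C_0^{-1} (J^n)_{11} C_0, where P_0(z) = (1, z)ᵀ, C_0 = [[1,0],[−a_1,1]], and (J^n)_{11} is the leading 2×2 block of J^n. -/

import Mathlib

open Polynomial Matrix Finset

noncomputable section

/-- Auxiliary shifted sequence: `Paux (n+2) = P_n`. -/
def Paux (a b c : ℕ → ℂ) : ℕ → Polynomial ℂ
  | 0 => 0
  | 1 => 0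
  | 2 => 1
  | n + 3 =>
      (X - C (a (n + 1))) * Paux a b c (n + 2)
        - C (b n) * Paux a b c (n + 1) - C (c (n - 1)) * Paux a b c n

/-- The polynomials `P_n` of the four-term recurrence. -/
def Pp (a b c : ℕ → ℂ) (n : ℕ) : Polynomial ℂ := Paux a b c (n + 2)

/-- The vector polynomials `B_m = (P_{2m}, P_{2m+1})ᵀ`. -/
def Bv (a b c : ℕ → ℂ) (m : ℕ) : Fin 2 → Polynomial ℂ :=
  ![Pp a b c (2 * m), Pp a b c (2 * m + 1)]

/-- The infinite four-banded matrix `J` (0-based indices). -/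
def Jmat (a b c : ℕ → ℂ) (i j : ℕ) : ℂ :=
  if i = j then a (i + 1)
  else if j = i + 1 then 1
  else if i = j + 1 then b (j + 1)
  else if i = j + 2 then c (j + 1)
  else 0

/-- The `n`-th power of `J`; since row `i` of `J` has its nonzero entries in columns
`≤ i + 1`, this finite sum is the genuine matrix product. -/
def Jpow (a b c : ℕ → ℂ) : ℕ → ℕ → ℕ → ℂ
  | 0 => fun i j => if i = j then 1 else 0
  | n + 1 => fun i j => ∑ k ∈ Finset.range (i + 2), Jmat a b c i k * Jpow a b c n k j

lemma Paux_rec (a b c : ℕ → ℂ) (n : ℕ) :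
    Paux a b c (n + 3) = (X - C (a (n + 1))) * Paux a b c (n + 2)
      - C (b n) * Paux a b c (n + 1) - C (c (n - 1)) * Paux a b c n := by
  rw [Paux]

lemma Jmat_eq_zero (a b c : ℕ → ℂ) {i j : ℕ} (h : i + 2 ≤ j ∨ j + 3 ≤ i) :
    Jmat a b c i j = 0 := by
  unfold Jmat
  rcases h with h | h <;>
  · rw [if_neg (by omega), if_neg (by omega), if_neg (by omega), if_neg (by omega)]

lemma step (a b c : ℕ → ℂ) (i : ℕ) :
    X * Pp a b c i = ∑ j ∈ Finset.range (i + 2), C (Jmat a b c i j) * Pp a b c j := by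
  match i with
  | 0 =>
    simp only [Finset.sum_range_succ, Finset.sum_range_zero, zero_add]
    have h0 : Jmat a b c 0 0 = a 1 := by simp [Jmat]
    have h1 : Jmat a b c 0 1 = 1 := by simp [Jmat]
    rw [h0, h1]
    show X * Paux a b c 2 = C (a 1) * Paux a b c 2 + C 1 * Paux a b c 3
    have p3 : Paux a b c 3 = (X - C (a 1)) * Paux a b c 2 - C (b 0) * Paux a b c 1
        - C (c 0) * Paux a b c 0 := Paux_rec a b c 0
    rw [p3, show Paux a b c 0 = 0 from rfl, show Paux a b c 1 = 0 from rfl, Polynomial.C_1]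
    ring
  | 1 =>
    have h10 : Jmat a b c 1 0 = b 1 := by simp [Jmat]
    have h11 : Jmat a b c 1 1 = a 2 := by simp [Jmat]
    have h12 : Jmat a b c 1 2 = 1 := by simp [Jmat]
    simp only [Finset.sum_range_succ, Finset.sum_range_zero, zero_add, h10, h11, h12]
    show X * Paux a b c 3 = C (b 1) * Paux a b c 2 + C (a 2) * Paux a b c 3 + C 1 * Paux a b c 4
    have p4 : Paux a b c 4 = (X - C (a 2)) * Paux a b c 3 - C (b 1) * Paux a b c 2
        - C (c 0) * Paux a b c 1 := Paux_rec a b c 1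
    rw [p4, show Paux a b c 1 = 0 from rfl, Polynomial.C_1]
    ring
  | (m + 2) =>
    have hz : ∑ j ∈ Finset.range m, C (Jmat a b c (m+2) j) * Pp a b c j = 0 := by
      apply Finset.sum_eq_zero
      intro j hj
      rw [Jmat_eq_zero a b c (Or.inr (by simp at hj; omega))]
      simp
    rw [show m + 2 + 2 = m + 4 by ring]
    rw [Finset.sum_range_succ, Finset.sum_range_succ, Finset.sum_range_succ,
      Finset.sum_range_succ, hz, zero_add]
    have e0 : Jmat a b c (m+2) m = c (m+1) := by
      unfold Jmat; rw [if_neg (by omega), if_neg (by omega), if_neg (by omega), if_pos rfl]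
    have e1 : Jmat a b c (m+2) (m+1) = b (m+2) := by
      unfold Jmat; rw [if_neg (by omega), if_neg (by omega), if_pos rfl]
    have e2 : Jmat a b c (m+2) (m+2) = a (m+3) := by
      unfold Jmat; rw [if_pos rfl]
    have e3 : Jmat a b c (m+2) (m+3) = 1 := by
      unfold Jmat; rw [if_neg (by omega), if_pos rfl]
    rw [e0, e1, e2, e3]
    show X * Paux a b c (m + 4) = C (c (m+1)) * Paux a b c (m+2) + C (b (m+2)) * Paux a b c (m+3)
      + C (a (m+3)) * Paux a b c (m+4) + C 1 * Paux a b c (m+5)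
    have p5 : Paux a b c (m+5) = (X - C (a (m+3))) * Paux a b c (m+4)
        - C (b (m+2)) * Paux a b c (m+3) - C (c (m+1)) * Paux a b c (m+2) := by
      have h := Paux_rec a b c (m+2)
      simpa [show m+2+3 = m+5 by omega, show m+2+1 = m+3 by omega,
        show m+2+2 = m+4 by omega, show m+2-1 = m+1 by omega] using h
    rw [p5, Polynomial.C_1]
    ring

lemma Jpow_support (a b c : ℕ → ℂ) : ∀ (n i j : ℕ), i + n < j → Jpow a b c n i j = 0 := by
  intro n
  induction n with
  | zero => intro i j h; simp only [Jpow]; rw [if_neg (by omega)]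
  | succ n ih =>
    intro i j h
    simp only [Jpow]
    apply Finset.sum_eq_zero
    intro k hk
    rw [ih k j (by simp at hk; omega), mul_zero]

lemma pow_step (a b c : ℕ → ℂ) : ∀ (n i : ℕ),
    X ^ n * Pp a b c i = ∑ j ∈ Finset.range (i + n + 1), C (Jpow a b c n i j) * Pp a b c j := by
  intro n
  induction n with
  | zero =>
    intro i
    simp only [pow_zero, one_mul, Jpow]
    rw [Finset.sum_eq_single i]
    · rw [if_pos rfl, Polynomial.C_1, one_mul]
    · intro j hj hne; rw [if_neg (Ne.symm hne), map_zero, zero_mul]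
    · intro h; exact absurd (Finset.self_mem_range_succ i) (by simpa using h)
  | succ n ih =>
    intro i
    have h1 : X ^ (n + 1) * Pp a b c i = X ^ n * (X * Pp a b c i) := by ring
    rw [h1, step a b c i, Finset.mul_sum]
    have h2 : ∀ k ∈ Finset.range (i + 2),
        X ^ n * (C (Jmat a b c i k) * Pp a b c k)
          = ∑ j ∈ Finset.range (i + n + 2), C (Jmat a b c i k * Jpow a b c n k j) * Pp a b c j := by
      intro k hk
      simp only [Finset.mem_range] at hk
      have hcomm : X ^ n * (C (Jmat a b c i k) * Pp a b c k)
          = C (Jmat a b c i k) * (X ^ n * Pp a b c k) := by ring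
      have hsub : ∑ j ∈ Finset.range (k + n + 1),
            C (Jmat a b c i k) * (C (Jpow a b c n k j) * Pp a b c j)
          = ∑ j ∈ Finset.range (i + n + 2),
            C (Jmat a b c i k) * (C (Jpow a b c n k j) * Pp a b c j) := by
        apply Finset.sum_subset (Finset.range_subset_range.2 (by omega))
        intro j hj hj2
        simp only [Finset.mem_range] at hj hj2
        rw [Jpow_support a b c n k j (by omega), map_zero, zero_mul, mul_zero]
      rw [hcomm, ih k, Finset.mul_sum, hsub]
      exact Finset.sum_congr rfl (fun j _ => by rw [Polynomial.C_mul]; ring)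
    rw [Finset.sum_congr rfl h2, Finset.sum_comm]
    apply Finset.sum_congr (by rw [show i + (n + 1) + 1 = i + n + 2 by omega])
    intro j hj
    rw [← Finset.sum_mul, ← map_sum]
    rfl

lemma sum_range_two_mul {M : Type*} [AddCommMonoid M] (f : ℕ → M) (m : ℕ) :
    ∑ j ∈ Finset.range (2 * m), f j = ∑ q ∈ Finset.range m, (f (2 * q) + f (2 * q + 1)) := by
  induction m with
  | zero => simp
  | succ m ih =>
    rw [Finset.sum_range_succ, ← ih, show 2 * (m + 1) = (2 * m) + 1 + 1 by ring,
      Finset.sum_range_succ, Finset.sum_range_succ, add_assoc]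

/-- The 2×2 block of an infinite matrix at (0-based) block position `(p,q)`. -/
def blk (M : ℕ → ℕ → ℂ) (p q : ℕ) : Matrix (Fin 2) (Fin 2) ℂ :=
  Matrix.of fun r s : Fin 2 => M (2 * p + (r : ℕ)) (2 * q + (s : ℕ))

/-- The matrix `C₀ = [[1,0],[−a₁,1]]`. -/
def C0mat (a : ℕ → ℂ) : Matrix (Fin 2) (Fin 2) ℂ := !![1, 0; -(a 1), 1]

/-- The vector `P₀(z) = (1, z)ᵀ`. -/
def P0vec : Fin 2 → Polynomial ℂ := ![1, X]

lemma comp (a b c : ℕ → ℂ) (n r : ℕ) (hr : r ≤ 1) :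
    X ^ n * Pp a b c r = ∑ q ∈ Finset.range (n + 1),
      (C (Jpow a b c n r (2 * q)) * Pp a b c (2 * q)
        + C (Jpow a b c n r (2 * q + 1)) * Pp a b c (2 * q + 1)) := by
  rw [pow_step]
  have hsub : ∑ j ∈ Finset.range (r + n + 1), C (Jpow a b c n r j) * Pp a b c j
      = ∑ j ∈ Finset.range (2 * (n + 1)), C (Jpow a b c n r j) * Pp a b c j := by
    apply Finset.sum_subset (Finset.range_subset_range.2 (by omega))
    intro j hj hj2
    simp only [Finset.mem_range] at hj hj2
    rw [Jpow_support a b c n r j (by omega), map_zero, zero_mul]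
  rw [hsub, sum_range_two_mul]

lemma Bv_zero_eq (a b c : ℕ → ℂ) : Bv a b c 0 = (C0mat a).map C *ᵥ P0vec := by
  have pp0 : Pp a b c 0 = 1 := rfl
  have pp1 : Pp a b c 1 = X - C (a 1) := by
    show Paux a b c 3 = _
    have p3 : Paux a b c 3 = (X - C (a 1)) * Paux a b c 2 - C (b 0) * Paux a b c 1
        - C (c 0) * Paux a b c 0 := Paux_rec a b c 0
    rw [p3, show Paux a b c 0 = 0 from rfl, show Paux a b c 1 = 0 from rfl,
      show Paux a b c 2 = 1 from rfl]
    ring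
  funext i
  fin_cases i <;>
    simp [Bv, C0mat, P0vec, Matrix.mulVec, dotProduct, Fin.sum_univ_two,
      Matrix.map_apply, pp0, pp1] <;> ring

lemma key (a b c : ℕ → ℂ) (n : ℕ) :
    (fun i => X ^ n * Bv a b c 0 i)
      = ∑ q ∈ Finset.range (n + 1), ((blk (Jpow a b c n) 0 q).map C *ᵥ Bv a b c q) := by
  funext i
  rw [Finset.sum_apply]
  fin_cases i
  · have h := comp a b c n 0 (by omega)
    simp only [Bv, Fin.mk_zero, Matrix.cons_val_zero] at h ⊢
    simp only [Nat.mul_zero, Nat.zero_add]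
    rw [h]
    apply Finset.sum_congr rfl
    intro q _
    simp [blk, Bv, Matrix.mulVec, dotProduct, Fin.sum_univ_two, Matrix.map_apply]
  · have h := comp a b c n 1 (by omega)
    simp only [Bv, Fin.mk_one, Matrix.cons_val_one, Matrix.head_cons, Matrix.cons_val_zero] at h ⊢
    simp only [Nat.mul_zero, Nat.zero_add]
    rw [h]
    apply Finset.sum_congr rfl
    intro q _
    simp [blk, Bv, Matrix.mulVec, dotProduct, Fin.sum_univ_two, Matrix.map_apply]

lemma mulVec_mulX (M : Matrix (Fin 2) (Fin 2) (Polynomial ℂ)) (p : Polynomial ℂ)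
    (v : Fin 2 → Polynomial ℂ) :
    (M *ᵥ fun j => p * v j) = fun j => p * (M *ᵥ v) j := by
  funext j
  simp only [Matrix.mulVec, dotProduct, Finset.mul_sum]
  apply Finset.sum_congr rfl
  intros
  ring

/-- Moment representation: the `n`-th moment of the normalized vector of functionals is
`U(zⁿ P₀) = C₀⁻¹ (Jⁿ)₁₁ C₀`. -/
theorem moments_eq_block (a b c : ℕ → ℂ) (hb0 : b 0 = 0) (hc0 : c 0 = 0)
    (U : (Fin 2 → Polynomial ℂ) →ₗ[ℂ] Matrix (Fin 2) (Fin 2) ℂ)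
    (hM2 : ∀ (A : Matrix (Fin 2) (Fin 2) ℂ) (Q : Fin 2 → Polynomial ℂ),
      U (A.map C *ᵥ Q) = A * U Q)
    (hU0 : U (Bv a b c 0) = C0mat a)
    (hUm : ∀ m : ℕ, 1 ≤ m → U (Bv a b c m) = 0) :
    ∀ n : ℕ,
      U (fun i => X ^ n * P0vec i) =
        (C0mat a)⁻¹ * blk (Jpow a b c n) 0 0 * C0mat a := by
  intro n
  have hdet : IsUnit (C0mat a).det := by
    simp [C0mat, Matrix.det_fin_two_of]
  have hinv : (C0mat a)⁻¹ * C0mat a = 1 := Matrix.nonsing_inv_mul _ hdet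
  have hvec : (((C0mat a)⁻¹).map C *ᵥ fun i => X ^ n * Bv a b c 0 i)
      = fun i => X ^ n * P0vec i := by
    have h1 : (fun i => X ^ n * Bv a b c 0 i)
        = ((C0mat a).map C *ᵥ fun i => X ^ n * P0vec i) := by
      rw [mulVec_mulX, Bv_zero_eq]
    rw [h1, Matrix.mulVec_mulVec, ← Matrix.map_mul, hinv,
      Matrix.map_one _ (map_zero C) (map_one C), Matrix.one_mulVec]
  have hUw : U (fun i => X ^ n * Bv a b c 0 i) = blk (Jpow a b c n) 0 0 * C0mat a := by
    rw [key a b c n, map_sum]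
    rw [Finset.sum_eq_single_of_mem 0 (Finset.mem_range.2 (by omega))]
    · rw [hM2, hU0]
    · intro q _ hq
      rw [hM2, hUm q (by omega), mul_zero]
  rw [← hvec, hM2, hUw, mul_assoc]
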